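/- Let 0 < λ < 1, let ζ, ω ∈ 𝕋 with ω ≠ ζ, and let φ : 𝔻 → 𝔻 be holomorphic such that lim_{r→1⁻} φ(rζ) = ω and sup_{0<r<1} |φ′(rζ)| < ∞. Put f_ζ(z) = (1−\bar{ζ}z)^{−(1−λ)/2}. Then limsup_{r→1⁻} (1−r)^{(3−λ)/2} |f_ζ′(φ(rζ)) φ′(rζ) − f_ζ′(rζ)| ≥ (1−λ)/2; hence ‖f_ζ∘φ − f_ζ‖_{B^{(3−λ)/2}} ≥ (1−λ)/2. -/

import Mathlib

open Complex Set Filter Metric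

noncomputable section

/-- The (extended-real-valued) Bloch-type norm ‖g‖_{B^α}. -/
def blochNormE (α : ℝ) (g : ℂ → ℂ) : ENNReal :=
  ENNReal.ofReal ‖g 0‖ +
    ⨆ z ∈ ball (0:ℂ) 1, ENNReal.ofReal ((1 - ‖z‖ ^ 2) ^ α * ‖deriv g z‖)

lemma aux_re_pos_of_lt {w : ℂ} (h : ‖w‖ < 1) : 0 < (1 - w).re := by
  have h1 : |w.re| ≤ ‖w‖ := Complex.abs_re_le_norm w
  have h2 : w.re ≤ |w.re| := le_abs_self _
  simp only [Complex.sub_re, Complex.one_re]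
  linarith

lemma aux_re_pos_of_eq {w : ℂ} (h : ‖w‖ = 1) (hw : w ≠ 1) : 0 < (1 - w).re := by
  simp only [Complex.sub_re, Complex.one_re, sub_pos]
  by_contra hc
  push_neg at hc
  have h1 : |w.re| ≤ ‖w‖ := Complex.abs_re_le_norm w
  have h2 : w.re ≤ |w.re| := le_abs_self _
  have h2' : w.re ≤ 1 := by rw [← h]; linarith
  have hre : w.re = 1 := le_antisymm h2' hc
  have hnsq : Complex.normSq w = 1 := by
    rw [Complex.normSq_eq_norm_sq, h]; norm_num
  have him : w.im = 0 := by
    have := Complex.normSq_apply w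
    nlinarith [this, hre, hnsq]
  exact hw (Complex.ext (by simp [hre]) (by simp [him]))

theorem bloch_lower_bound_boundary_limit
    (lam : ℝ) (hlam0 : 0 < lam) (hlam1 : lam < 1)
    (ζ ω : ℂ) (hζ : ‖ζ‖ = 1) (hω : ‖ω‖ = 1) (hne : ω ≠ ζ)
    (φ : ℂ → ℂ) (hφhol : DifferentiableOn ℂ φ (ball (0:ℂ) 1))
    (hφmaps : MapsTo φ (ball (0:ℂ) 1) (ball (0:ℂ) 1))
    (hlim : Tendsto (fun r : ℝ => φ ((r : ℂ) * ζ)) (nhdsWithin 1 (Iio 1)) (nhds ω))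
    (hder : ∃ M : ℝ, ∀ r ∈ Set.Ioo (0:ℝ) 1, ‖deriv φ ((r : ℂ) * ζ)‖ ≤ M)
    (fζ : ℂ → ℂ)
    (hfζ : fζ = fun z => (1 - (starRingEnd ℂ) ζ * z) ^ (-((1 : ℂ) - (lam : ℂ)) / 2)) :
    (∀ ε > 0, ∃ᶠ r : ℝ in nhdsWithin 1 (Iio 1),
      (1 - lam) / 2 - ε < (1 - r) ^ ((3 - lam) / 2) *
        ‖deriv fζ (φ ((r : ℂ) * ζ)) * deriv φ ((r : ℂ) * ζ) - deriv fζ ((r : ℂ) * ζ)‖) ∧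
    ENNReal.ofReal ((1 - lam) / 2) ≤ blochNormE ((3 - lam) / 2) (fζ ∘ φ - fζ) := by
  obtain ⟨M, hM⟩ := hder
  set α : ℝ := (3 - lam) / 2 with hα
  have hαpos : 0 < α := by rw [hα]; linarith
  set c : ℂ := (((lam - 1) / 2 : ℝ) : ℂ) with hc
  have hcexp : (-((1 : ℂ) - (lam : ℂ)) / 2) = c := by rw [hc]; push_cast; ring
  have hfζ' : fζ = fun z => (1 - (starRingEnd ℂ) ζ * z) ^ c := by rw [hfζ, hcexp]
  -- conj ζ * ζ = 1
  have hζζ : (starRingEnd ℂ) ζ * ζ = 1 := by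
    have : ζ * (starRingEnd ℂ) ζ = (Complex.normSq ζ : ℂ) := Complex.mul_conj ζ
    rw [mul_comm] at this
    rw [this, Complex.normSq_eq_norm_sq, hζ]; norm_num
  -- the derivative function
  set g : ℂ → ℂ := fun z => c * (1 - (starRingEnd ℂ) ζ * z) ^ (c - 1) * (-(starRingEnd ℂ) ζ)
    with hg
  have habs_conj : ∀ z : ℂ, ‖(starRingEnd ℂ) ζ * z‖ = ‖z‖ := by
    intro z; rw [norm_mul, Complex.norm_conj, hζ, one_mul]
  -- slit plane membership
  have hball : ∀ z ∈ ball (0:ℂ) 1, (1 - (starRingEnd ℂ) ζ * z) ∈ Complex.slitPlane := by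
    intro z hz
    rw [mem_ball_zero_iff] at hz
    exact Complex.mem_slitPlane_iff.mpr (Or.inl (aux_re_pos_of_lt (by
      rw [habs_conj]; exact hz)))
  have hωslit : (1 - (starRingEnd ℂ) ζ * ω) ∈ Complex.slitPlane := by
    refine Complex.mem_slitPlane_iff.mpr (Or.inl (aux_re_pos_of_eq (by rw [habs_conj, hω]) ?_))
    intro h
    apply hne
    have : ζ * ((starRingEnd ℂ) ζ * ω) = ζ * 1 := by rw [h]
    rw [← mul_assoc, mul_comm ζ, hζζ, one_mul, mul_one] at this
    exact this
  -- derivative of fζ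
  have hderiv : ∀ z : ℂ, (1 - (starRingEnd ℂ) ζ * z) ∈ Complex.slitPlane →
      HasDerivAt fζ (g z) z := by
    intro z hslit
    have h1 : HasDerivAt (fun w : ℂ => 1 - (starRingEnd ℂ) ζ * w) (-(starRingEnd ℂ) ζ) z := by
      have := ((hasDerivAt_id z).const_mul ((starRingEnd ℂ) ζ)).const_sub 1
      simpa using this
    have := h1.cpow_const (c := c) hslit
    rw [hfζ']
    simpa [hg] using this
  have hderiv_eq : ∀ z : ℂ, (1 - (starRingEnd ℂ) ζ * z) ∈ Complex.slitPlane →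
      deriv fζ z = g z := fun z hz => (hderiv z hz).deriv
  -- 1 - conj ζ * (r ζ) = 1 - r
  have hkey : ∀ r : ℝ, 1 - (starRingEnd ℂ) ζ * ((r : ℂ) * ζ) = ((1 - r : ℝ) : ℂ) := by
    intro r
    rw [show (starRingEnd ℂ) ζ * ((r : ℂ) * ζ) = ((starRingEnd ℂ) ζ * ζ) * (r : ℂ) by ring,
      hζζ, one_mul]
    push_cast; ring
  have hrball : ∀ r ∈ Set.Ioo (0:ℝ) 1, ((r : ℂ) * ζ) ∈ ball (0:ℂ) 1 := by
    intro r hr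
    rw [mem_ball_zero_iff]
    have : ‖(r : ℂ) * ζ‖ = |r| := by
      rw [norm_mul, Complex.norm_real, Real.norm_eq_abs, hζ, mul_one]
    rw [this, abs_of_pos hr.1]
    exact hr.2
  -- norm of g at rζ
  have habsc : ‖c‖ = (1 - lam) / 2 := by
    rw [hc, Complex.norm_real, Real.norm_eq_abs, abs_of_neg (by linarith)]
    ring
  have hcm1 : c - 1 = (((lam - 3) / 2 : ℝ) : ℂ) := by rw [hc]; push_cast; ring
  have hnormC : ∀ r ∈ Set.Ioo (0:ℝ) 1,
      (1 - r) ^ α * ‖deriv fζ ((r : ℂ) * ζ)‖ = (1 - lam) / 2 := by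
    intro r hr
    have h1r : (0:ℝ) < 1 - r := by linarith [hr.2]
    have hslit : (1 - (starRingEnd ℂ) ζ * ((r : ℂ) * ζ)) ∈ Complex.slitPlane :=
      hball _ (hrball r hr)
    rw [hderiv_eq _ hslit, hg]
    simp only [hkey r]
    rw [norm_mul, norm_mul, norm_neg, Complex.norm_conj, hζ, habsc,
      hcm1, ← Complex.ofReal_cpow (le_of_lt h1r)]
    rw [Complex.norm_real, Real.norm_eq_abs, abs_of_pos (Real.rpow_pos_of_pos h1r _)]
    have hexp : (lam - 3) / 2 = -α := by rw [hα]; ring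
    rw [hexp, Real.rpow_neg h1r.le, mul_one]
    field_simp
  -- continuity of g at ω
  have hgcont : ContinuousAt g ω := by
    have hlin : ContinuousAt (fun z : ℂ => 1 - (starRingEnd ℂ) ζ * z) ω := by fun_prop
    exact ((continuousAt_const.mul (hlin.cpow continuousAt_const hωslit)).mul
      continuousAt_const)
  -- tendsto of the first-term product to 0
  have hpow0 : Tendsto (fun r : ℝ => (1 - r) ^ α) (nhdsWithin 1 (Iio 1)) (nhds 0) := by
    have h1 : Tendsto (fun r : ℝ => 1 - r) (nhdsWithin 1 (Iio 1)) (nhds 0) := by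
      have h0 : Tendsto (fun r : ℝ => 1 - r) (nhds 1) (nhds (1 - 1)) :=
        (continuous_const.sub continuous_id).tendsto 1
      simpa using h0.mono_left nhdsWithin_le_nhds
    have h2 : ContinuousAt (fun x : ℝ => x ^ α) 0 :=
      Real.continuousAt_rpow_const 0 α (Or.inr (le_of_lt hαpos))
    have := h2.tendsto.comp h1
    rwa [Real.zero_rpow (ne_of_gt hαpos)] at this
  have hnormg : Tendsto (fun r : ℝ => ‖g (φ ((r : ℂ) * ζ))‖) (nhdsWithin 1 (Iio 1))
      (nhds ‖g ω‖) := ((continuous_norm.continuousAt).tendsto.comp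
        (hgcont.tendsto.comp hlim))
  have hIoo : ∀ᶠ r : ℝ in nhdsWithin 1 (Iio 1), r ∈ Set.Ioo (0:ℝ) 1 := by
    have h1 : ∀ᶠ r : ℝ in nhdsWithin 1 (Iio 1), r < 1 := eventually_mem_nhdsWithin
    have h2 : ∀ᶠ r : ℝ in nhdsWithin 1 (Iio 1), 0 < r :=
      eventually_nhdsWithin_of_eventually_nhds (eventually_gt_nhds (by norm_num))
    filter_upwards [h1, h2] with r hr1 hr2 using ⟨hr2, hr1⟩
  set C : ℝ := ‖g ω‖ + 1 with hC
  set M' : ℝ := max M 0 with hM'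
  have hT : Tendsto (fun r : ℝ => (1 - r) ^ α *
      ‖g (φ ((r : ℂ) * ζ)) * deriv φ ((r : ℂ) * ζ)‖) (nhdsWithin 1 (Iio 1)) (nhds 0) := by
    have hgb : ∀ᶠ r : ℝ in nhdsWithin 1 (Iio 1), ‖g (φ ((r : ℂ) * ζ))‖ ≤ C := by
      filter_upwards [hnormg.eventually (eventually_lt_nhds (show ‖g ω‖ < C by
        rw [hC]; linarith))] with r hr using le_of_lt hr
    have hRHS : Tendsto (fun r : ℝ => (1 - r) ^ α * (C * M')) (nhdsWithin 1 (Iio 1))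
        (nhds 0) := by
      have := hpow0.mul_const (C * M')
      simpa using this
    refine squeeze_zero' ?_ ?_ hRHS
    · filter_upwards [hIoo] with r hr
      exact mul_nonneg (Real.rpow_nonneg (by linarith [hr.2]) _) (norm_nonneg _)
    · filter_upwards [hIoo, hgb] with r hr hgb'
      have h1r : (0:ℝ) ≤ 1 - r := by linarith [hr.2]
      have hp : (0:ℝ) ≤ (1 - r) ^ α := Real.rpow_nonneg h1r α
      refine mul_le_mul_of_nonneg_left ?_ hp
      calc ‖g (φ ((r : ℂ) * ζ)) * deriv φ ((r : ℂ) * ζ)‖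
          = ‖g (φ ((r : ℂ) * ζ))‖ * ‖deriv φ ((r : ℂ) * ζ)‖ := norm_mul _ _
        _ ≤ C * M' := by
            refine mul_le_mul hgb' ((hM r hr).trans (le_max_left _ _)) (norm_nonneg _) ?_
            rw [hC]; positivity
  -- main eventual inequality
  have hmain : ∀ ε : ℝ, 0 < ε → ∀ᶠ r : ℝ in nhdsWithin 1 (Iio 1), r ∈ Set.Ioo (0:ℝ) 1 ∧
      (1 - lam) / 2 - ε < (1 - r) ^ α *
        ‖deriv fζ (φ ((r : ℂ) * ζ)) * deriv φ ((r : ℂ) * ζ) - deriv fζ ((r : ℂ) * ζ)‖ := by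
    intro ε hε
    have hsmall : ∀ᶠ r : ℝ in nhdsWithin 1 (Iio 1), (1 - r) ^ α *
        ‖g (φ ((r : ℂ) * ζ)) * deriv φ ((r : ℂ) * ζ)‖ < ε :=
      hT.eventually (eventually_lt_nhds hε)
    filter_upwards [hIoo, hsmall] with r hr hsm
    refine ⟨hr, ?_⟩
    have h1r : (0:ℝ) < 1 - r := by linarith [hr.2]
    have hderiv_fφ : deriv fζ (φ ((r : ℂ) * ζ)) = g (φ ((r : ℂ) * ζ)) :=
      hderiv_eq _ (hball _ (hφmaps (hrball r hr)))
    set A := deriv fζ (φ ((r : ℂ) * ζ)) * deriv φ ((r : ℂ) * ζ) with hA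
    set B := deriv fζ ((r : ℂ) * ζ) with hB
    have hnormsub : ‖B‖ - ‖A‖ ≤ ‖A - B‖ := by
      rw [norm_sub_rev]; exact norm_sub_norm_le _ _
    have h2 : (1 - r) ^ α * ‖A‖ < ε := by rw [hA, hderiv_fφ]; exact hsm
    have h1 : (1 - r) ^ α * ‖B‖ = (1 - lam) / 2 := hnormC r hr
    have hp : (0:ℝ) ≤ (1 - r) ^ α := Real.rpow_nonneg (le_of_lt h1r) α
    calc (1 - lam) / 2 - ε < (1 - r) ^ α * ‖B‖ - (1 - r) ^ α * ‖A‖ := by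
          rw [h1]; linarith
      _ = (1 - r) ^ α * (‖B‖ - ‖A‖) := by ring
      _ ≤ (1 - r) ^ α * ‖A - B‖ := mul_le_mul_of_nonneg_left hnormsub hp
  constructor
  · intro ε hε
    exact ((hmain ε hε).mono (fun r hr => hr.2)).frequently
  · -- second part : Bloch norm lower bound
    set S : ENNReal := ⨆ z ∈ ball (0:ℂ) 1,
      ENNReal.ofReal ((1 - ‖z‖ ^ 2) ^ α * ‖deriv (fζ ∘ φ - fζ) z‖) with hS
    have hSle : ∀ ε : ℝ, 0 < ε → ENNReal.ofReal ((1 - lam) / 2 - ε) ≤ S := by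
      intro ε hε
      obtain ⟨r, hr, hlt⟩ := (hmain ε hε).exists
      set z : ℂ := (r : ℂ) * ζ with hz
      have hzball : z ∈ ball (0:ℂ) 1 := hrball r hr
      have h1r : (0:ℝ) < 1 - r := by linarith [hr.2]
      -- compute deriv of fζ ∘ φ - fζ at z
      have hφda : DifferentiableAt ℂ φ z := hφhol.differentiableAt (isOpen_ball.mem_nhds hzball)
      have hcomp : HasDerivAt (fζ ∘ φ) (deriv fζ (φ z) * deriv φ z) z := by
        have hf : HasDerivAt fζ (g (φ z)) (φ z) := hderiv _ (hball _ (hφmaps hzball))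
        have := HasDerivAt.comp z hf hφda.hasDerivAt
        rwa [hderiv_eq _ (hball _ (hφmaps hzball))]
      have hfz : HasDerivAt fζ (g z) z := hderiv _ (hball _ hzball)
      have hsub : HasDerivAt (fζ ∘ φ - fζ) (deriv fζ (φ z) * deriv φ z - deriv fζ z) z := by
        rw [hderiv_eq _ (hball _ hzball)]
        exact hcomp.sub hfz
      have hderiv_sub : deriv (fζ ∘ φ - fζ) z = deriv fζ (φ z) * deriv φ z - deriv fζ z :=
        hsub.deriv
      -- (1 - |z|²)^α ≥ (1-r)^α
      have habsz : ‖z‖ = r := by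
        rw [hz, norm_mul, Complex.norm_real, Real.norm_eq_abs, hζ, mul_one, abs_of_pos hr.1]
      have hpow_le : (1 - r) ^ α ≤ (1 - ‖z‖ ^ 2) ^ α := by
        refine Real.rpow_le_rpow (le_of_lt h1r) ?_ (le_of_lt hαpos)
        rw [habsz]
        nlinarith [hr.1, hr.2]
      have hfinal : (1 - lam) / 2 - ε <
          (1 - ‖z‖ ^ 2) ^ α * ‖deriv (fζ ∘ φ - fζ) z‖ := by
        rw [hderiv_sub]
        calc (1 - lam) / 2 - ε
            < (1 - r) ^ α * ‖deriv fζ (φ z) * deriv φ z - deriv fζ z‖ := hlt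
          _ ≤ (1 - ‖z‖ ^ 2) ^ α * ‖deriv fζ (φ z) * deriv φ z - deriv fζ z‖ :=
              mul_le_mul_of_nonneg_right hpow_le (norm_nonneg _)
      calc ENNReal.ofReal ((1 - lam) / 2 - ε)
          ≤ ENNReal.ofReal ((1 - ‖z‖ ^ 2) ^ α * ‖deriv (fζ ∘ φ - fζ) z‖) :=
            ENNReal.ofReal_le_ofReal (le_of_lt hfinal)
        _ ≤ S := by
            rw [hS]
            exact le_iSup₂ (f := fun z _ => ENNReal.ofReal
              ((1 - ‖z‖ ^ 2) ^ α * ‖deriv (fζ ∘ φ - fζ) z‖)) z hzball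
    have hSfin : ENNReal.ofReal ((1 - lam) / 2) ≤ S := by
      refine ENNReal.le_of_forall_pos_le_add (fun ε hε _ => ?_)
      calc ENNReal.ofReal ((1 - lam) / 2)
          = ENNReal.ofReal (((1 - lam) / 2 - (ε : ℝ)) + (ε : ℝ)) := by norm_num
        _ ≤ ENNReal.ofReal ((1 - lam) / 2 - (ε : ℝ)) + ENNReal.ofReal (ε : ℝ) :=
            ENNReal.ofReal_add_le
        _ ≤ S + (ε : ENNReal) := by
            refine add_le_add (hSle _ (by exact_mod_cast hε)) ?_
            rw [ENNReal.ofReal_coe_nnreal]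
      -- done
    calc ENNReal.ofReal ((1 - lam) / 2) ≤ S := hSfin
      _ ≤ blochNormE α (fζ ∘ φ - fζ) := by
          rw [blochNormE, hS]
          exact le_add_self

end
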